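/- For every positive integer k and every nonnegative integer n, p_k(n) ≤ e^{π√(2kn/3)}. -/

import Mathlib

open Real

/-- The number of `k`-colored partitions of `n`. -/
noncomputable def coloredPartition (k n : ℕ) : ℕ :=
  Nat.card {s : Multiset (ℕ × Fin k) //
    (∀ x ∈ s, 0 < x.1) ∧ (s.map Prod.fst).sum = n}

section CPaux
open Finset



variable {k n : ℕ}

private def embP (k n : ℕ) : Fin n × Fin k ↪ ℕ × Fin k :=
  ⟨fun p => (p.1.1 + 1, p.2), by
    intro p q h
    simp only [Prod.mk.injEq, add_left_inj] at h
    exact Prod.ext (Fin.val_injective h.1) h.2⟩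

private lemma mem_fst_le (s : Multiset (ℕ × Fin k))
    (hsum : (s.map Prod.fst).sum = n) {a : ℕ × Fin k} (ha : a ∈ s) : a.1 ≤ n := by
  have h1 : a.1 ∈ s.map Prod.fst := Multiset.mem_map_of_mem _ ha
  calc a.1 ≤ (s.map Prod.fst).sum :=
        Multiset.single_le_sum (fun x _ => Nat.zero_le x) _ h1
    _ = n := hsum

private lemma weight_eq (s : Multiset (ℕ × Fin k))
    (hpos : ∀ x ∈ s, 0 < x.1) (hsum : (s.map Prod.fst).sum = n) :
    ∑ p : Fin n × Fin k, (p.1.1 + 1) * s.count (p.1.1 + 1, p.2) = n := by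
  classical
  have h1 : ∑ p : Fin n × Fin k, (p.1.1 + 1) * s.count (p.1.1 + 1, p.2)
      = ∑ a ∈ Finset.univ.map (embP k n), a.1 * s.count a := by
    rw [Finset.sum_map]
    rfl
  have hsub : s.toFinset ⊆ Finset.univ.map (embP k n) := by
    intro a ha
    have ha' : a ∈ s := Multiset.mem_toFinset.mp ha
    have h0 : 0 < a.1 := hpos a ha'
    have hle : a.1 ≤ n := mem_fst_le s hsum ha'
    rw [Finset.mem_map]
    refine ⟨(⟨a.1 - 1, by omega⟩, a.2), Finset.mem_univ _, ?_⟩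
    show (a.1 - 1 + 1, a.2) = a
    obtain ⟨a1, a2⟩ := a
    simp only [Prod.mk.injEq, and_true]
    omega
  have h2 : ∑ a ∈ Finset.univ.map (embP k n), a.1 * s.count a
      = ∑ a ∈ s.toFinset, a.1 * s.count a := by
    refine (Finset.sum_subset hsub ?_).symm
    intro a _ ha
    have : s.count a = 0 := by
      rw [Multiset.count_eq_zero]
      exact fun hmem => ha (Multiset.mem_toFinset.mpr hmem)
    simp [this]
  have h3 : ∑ a ∈ s.toFinset, a.1 * s.count a = n := by
    rw [← hsum, Finset.sum_multiset_map_count]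
    exact Finset.sum_congr rfl fun a _ => by rw [smul_eq_mul, mul_comm]
  rw [h1, h2, h3]

private lemma count_lt (s : Multiset (ℕ × Fin k))
    (hpos : ∀ x ∈ s, 0 < x.1) (hsum : (s.map Prod.fst).sum = n)
    (p : Fin n × Fin k) : s.count (p.1.1 + 1, p.2) < n + 1 := by
  classical
  have h1 : (p.1.1 + 1) * s.count (p.1.1 + 1, p.2) ≤ n :=
    le_trans (Finset.single_le_sum (f := fun q : Fin n × Fin k =>
        (q.1.1 + 1) * s.count (q.1.1 + 1, q.2))
      (fun q _ => Nat.zero_le _) (Finset.mem_univ p))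
      (le_of_eq (weight_eq s hpos hsum))
  have h2 : s.count (p.1.1 + 1, p.2) ≤ (p.1.1 + 1) * s.count (p.1.1 + 1, p.2) :=
    Nat.le_mul_of_pos_left _ (Nat.succ_pos _)
  omega

private lemma card_le_filter :
    coloredPartition k n ≤ (Finset.univ.filter
      (fun f : Fin n × Fin k → Fin (n + 1) =>
        ∑ p : Fin n × Fin k, (p.1.1 + 1) * (f p).1 = n)).card := by
  classical
  have key : coloredPartition k n ≤ Nat.card {f : Fin n × Fin k → Fin (n + 1) //
      ∑ p : Fin n × Fin k, (p.1.1 + 1) * (f p).1 = n} := by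
    refine Nat.card_le_card_of_injective
      (fun s => ⟨fun p => ⟨s.1.count (p.1.1 + 1, p.2), count_lt s.1 s.2.1 s.2.2 p⟩,
        weight_eq s.1 s.2.1 s.2.2⟩) ?_
    intro s t h
    simp only [Subtype.mk.injEq] at h
    apply Subtype.ext
    ext a
    obtain ⟨m, c⟩ := a
    match m with
    | 0 =>
      rw [Multiset.count_eq_zero_of_notMem, Multiset.count_eq_zero_of_notMem]
      · exact fun hm => absurd (t.2.1 _ hm) (by simp)
      · exact fun hm => absurd (s.2.1 _ hm) (by simp)
    | Nat.succ m =>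
      by_cases hm : m < n
      · have := congrFun h (⟨m, hm⟩, c)
        simpa using congrArg Fin.val this
      · rw [Multiset.count_eq_zero_of_notMem, Multiset.count_eq_zero_of_notMem]
        · exact fun hmem => hm (by have := mem_fst_le t.1 t.2.2 hmem; omega)
        · exact fun hmem => hm (by have := mem_fst_le s.1 s.2.2 hmem; omega)
  rwa [Nat.card_eq_fintype_card, Fintype.card_subtype] at key

private lemma card_mul_le {x : ℝ} (hx0 : 0 ≤ x) :
    (coloredPartition k n : ℝ) * x ^ n ≤
      ∏ p : Fin n × Fin k, ∑ j : Fin (n + 1), x ^ ((p.1.1 + 1) * j.1) := by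
  classical
  set A := (Finset.univ.filter
      (fun f : Fin n × Fin k → Fin (n + 1) =>
        ∑ p : Fin n × Fin k, (p.1.1 + 1) * (f p).1 = n)) with hA
  calc (coloredPartition k n : ℝ) * x ^ n ≤ (A.card : ℝ) * x ^ n := by
        apply mul_le_mul_of_nonneg_right _ (pow_nonneg hx0 n)
        exact_mod_cast card_le_filter
    _ = ∑ _f ∈ A, x ^ n := by rw [Finset.sum_const, nsmul_eq_mul]
    _ = ∑ f ∈ A, x ^ (∑ p : Fin n × Fin k, (p.1.1 + 1) * (f p).1) := by
        refine Finset.sum_congr rfl fun f hf => ?_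
        rw [hA, Finset.mem_filter] at hf
        rw [hf.2]
    _ ≤ ∑ f : Fin n × Fin k → Fin (n + 1),
          x ^ (∑ p : Fin n × Fin k, (p.1.1 + 1) * (f p).1) := by
        apply Finset.sum_le_sum_of_subset_of_nonneg (Finset.filter_subset _ _)
        intro f _ _
        exact pow_nonneg hx0 _
    _ = ∑ f : Fin n × Fin k → Fin (n + 1),
          ∏ p : Fin n × Fin k, x ^ ((p.1.1 + 1) * (f p).1) :=
        Finset.sum_congr rfl fun f _ =>
          (Finset.prod_pow_eq_pow_sum univ _ x).symm
    _ = ∏ p : Fin n × Fin k, ∑ j : Fin (n + 1), x ^ ((p.1.1 + 1) * j.1) :=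
        (Fintype.prod_sum fun (p : Fin n × Fin k) (j : Fin (n + 1)) =>
          x ^ ((p.1.1 + 1) * j.1)).symm



private lemma cpGeomLe {y : ℝ} (h0 : 0 ≤ y) (h1 : y < 1) (N : ℕ) :
    ∑ j ∈ Finset.range N, y ^ j ≤ (1 - y)⁻¹ := by
  have h1y : 0 < 1 - y := by linarith
  have hg : (∑ i ∈ Finset.range N, y ^ i) * (1 - y) = 1 - y ^ N := by
    linear_combination (-(1 : ℝ)) * geom_sum_mul y N
  rw [inv_eq_one_div, le_div_iff₀ h1y]
  have := pow_nonneg h0 N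
  linarith

private lemma cpGeomTail {y : ℝ} (h0 : 0 ≤ y) (h1 : y < 1) (N : ℕ) :
    ∑ m ∈ Finset.range N, y ^ (m + 1) ≤ y / (1 - y) := by
  have h1y : 0 < 1 - y := by linarith
  have : ∑ m ∈ Finset.range N, y ^ (m + 1) = y * ∑ m ∈ Finset.range N, y ^ m := by
    rw [Finset.mul_sum]
    exact Finset.sum_congr rfl fun m _ => by rw [pow_succ, mul_comm]
  rw [this, div_eq_mul_inv]
  exact mul_le_mul_of_nonneg_left (cpGeomLe h0 h1 N) h0

private lemma cpOneSubPow {x : ℝ} (h0 : 0 ≤ x) (h1 : x ≤ 1) (j : ℕ) :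
    ((j : ℝ) + 1) * x ^ j * (1 - x) ≤ 1 - x ^ (j + 1) := by
  have hG : (1 - x) * ∑ i ∈ Finset.range (j + 1), x ^ i = 1 - x ^ (j + 1) := by
    linear_combination (-(1 : ℝ)) * geom_sum_mul x (j + 1)
  have hlow : ((j : ℝ) + 1) * x ^ j ≤ ∑ i ∈ Finset.range (j + 1), x ^ i := by
    have hc : ∑ i ∈ Finset.range (j + 1), x ^ j = ((j : ℝ) + 1) * x ^ j := by
      rw [Finset.sum_const, Finset.card_range, nsmul_eq_mul]
      push_cast; ring
    rw [← hc]
    exact Finset.sum_le_sum fun i hi =>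
      pow_le_pow_of_le_one h0 h1 (by have := Finset.mem_range.mp hi; omega)
  calc ((j : ℝ) + 1) * x ^ j * (1 - x) = (1 - x) * (((j : ℝ) + 1) * x ^ j) := by ring
    _ ≤ (1 - x) * ∑ i ∈ Finset.range (j + 1), x ^ i :=
        mul_le_mul_of_nonneg_left hlow (by linarith)
    _ = 1 - x ^ (j + 1) := hG

private lemma cpSumNegLog {x : ℝ} (hx0 : 0 < x) (hx1 : x < 1) (n : ℕ) :
    ∑ m ∈ Finset.range n, -Real.log (1 - x ^ (m + 1)) ≤ π ^ 2 / 6 * (x / (1 - x)) := by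
  have h1x : 0 < 1 - x := by linarith
  have hpow : ∀ N : ℕ, x ^ (N + 1) < 1 :=
    fun N => pow_lt_one₀ hx0.le hx1 (Nat.succ_ne_zero N)
  have habs : ∀ N : ℕ, |x ^ (N + 1)| < 1 :=
    fun N => by rw [abs_of_nonneg (pow_nonneg hx0.le _)]; exact hpow N
  have hlog : ∀ m : ℕ, -Real.log (1 - x ^ (m + 1))
      = ∑' j : ℕ, (x ^ (m + 1)) ^ (j + 1) / ((j : ℝ) + 1) := fun m => by
    have h := (Real.hasSum_pow_div_log_of_abs_lt_one (habs m)).tsum_eq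
    rw [← h]
  have hsummand : ∀ m ∈ Finset.range n,
      Summable (fun j : ℕ => (x ^ (m + 1)) ^ (j + 1) / ((j : ℝ) + 1)) := by
    intro m _
    exact (Real.hasSum_pow_div_log_of_abs_lt_one (habs m)).summable
  have hswap : ∑ m ∈ Finset.range n, -Real.log (1 - x ^ (m + 1))
      = ∑' j : ℕ, ∑ m ∈ Finset.range n, (x ^ (m + 1)) ^ (j + 1) / ((j : ℝ) + 1) := by
    rw [Finset.sum_congr rfl fun m _ => hlog m]
    exact (Summable.tsum_finsetSum hsummand).symm
  rw [hswap]
  have hzeta : HasSum (fun j : ℕ => (1 : ℝ) / ((j : ℝ) + 1) ^ 2) (π ^ 2 / 6) := by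
    have h2 : HasSum (fun j : ℕ => (1 : ℝ) / ((j + 1 : ℕ) : ℝ) ^ 2) (π ^ 2 / 6) := by
      rw [hasSum_nat_add_iff (f := fun m : ℕ => (1 : ℝ) / (m : ℝ) ^ 2) 1]
      simpa using hasSum_zeta_two
    have : (fun j : ℕ => (1 : ℝ) / ((j + 1 : ℕ) : ℝ) ^ 2)
        = fun j : ℕ => (1 : ℝ) / ((j : ℝ) + 1) ^ 2 := by
      funext j; norm_cast
    rwa [this] at h2
  have hFsum : HasSum (fun j : ℕ => x / (((j : ℝ) + 1) ^ 2 * (1 - x)))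
      (π ^ 2 / 6 * (x / (1 - x))) := by
    have h := hzeta.mul_right (x / (1 - x))
    have heq : (fun j : ℕ => x / (((j : ℝ) + 1) ^ 2 * (1 - x)))
        = fun j : ℕ => (1 : ℝ) / ((j : ℝ) + 1) ^ 2 * (x / (1 - x)) := by
      funext j
      have : ((j : ℝ) + 1) ^ 2 ≠ 0 := by positivity
      field_simp
    rwa [heq]
  have hterm : ∀ j : ℕ, ∑ m ∈ Finset.range n, (x ^ (m + 1)) ^ (j + 1) / ((j : ℝ) + 1)
      ≤ x / (((j : ℝ) + 1) ^ 2 * (1 - x)) := by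
    intro j
    have hc : (0 : ℝ) < (j : ℝ) + 1 := by positivity
    have hxj1 : x ^ (j + 1) < 1 := hpow j
    have hxj0 : 0 < x ^ (j + 1) := pow_pos hx0 _
    have h1xj : 0 < 1 - x ^ (j + 1) := by linarith
    have hgeom : ∑ m ∈ Finset.range n, (x ^ (m + 1)) ^ (j + 1)
        ≤ x ^ (j + 1) / (1 - x ^ (j + 1)) := by
      have hcomm : ∀ m : ℕ, (x ^ (m + 1)) ^ (j + 1) = (x ^ (j + 1)) ^ (m + 1) := fun m => by
        rw [← pow_mul, ← pow_mul, mul_comm]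
      rw [Finset.sum_congr rfl fun m _ => hcomm m]
      exact cpGeomTail hxj0.le hxj1 n
    rw [← Finset.sum_div]
    have step1 : (∑ m ∈ Finset.range n, (x ^ (m + 1)) ^ (j + 1)) / ((j : ℝ) + 1)
        ≤ x ^ (j + 1) / (1 - x ^ (j + 1)) / ((j : ℝ) + 1) := by gcongr
    refine step1.trans ?_
    rw [div_div, div_le_div_iff₀ (by positivity) (by positivity)]
    have key := cpOneSubPow hx0.le hx1.le j
    have e1 : x ^ (j + 1) * (((j : ℝ) + 1) ^ 2 * (1 - x))
        = (x * ((j : ℝ) + 1)) * (((j : ℝ) + 1) * x ^ j * (1 - x)) := by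
      rw [pow_succ]; ring
    have e2 : x * ((1 - x ^ (j + 1)) * ((j : ℝ) + 1))
        = (x * ((j : ℝ) + 1)) * (1 - x ^ (j + 1)) := by ring
    rw [e1, e2]
    exact mul_le_mul_of_nonneg_left key (by positivity)
  exact ((summable_sum hsummand).tsum_le_tsum hterm hFsum.summable).trans
    (le_of_eq hFsum.tsum_eq)

private lemma cpMainX {k n : ℕ} {x : ℝ} (hx0 : 0 < x) (hx1 : x < 1) :
    (coloredPartition k n : ℝ) ≤
      Real.exp (n * Real.log x⁻¹ + k * (π ^ 2 / 6 * (x / (1 - x)))) := by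
  have h1x : ∀ m : ℕ, 0 < 1 - x ^ (m + 1) := fun m => by
    have := pow_lt_one₀ hx0.le hx1 (show m + 1 ≠ 0 by omega); linarith
  have h1 : (coloredPartition k n : ℝ) * x ^ n ≤
      ∏ m ∈ Finset.range n, ((1 - x ^ (m + 1))⁻¹) ^ k := by
    refine (card_mul_le hx0.le).trans ?_
    calc ∏ p : Fin n × Fin k, ∑ j : Fin (n + 1), x ^ ((p.1.1 + 1) * j.1)
        ≤ ∏ p : Fin n × Fin k, (1 - x ^ (p.1.1 + 1))⁻¹ := by
          apply Finset.prod_le_prod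
          · intro p _
            apply Finset.sum_nonneg
            intro j _
            positivity
          · intro p _
            have heq : ∑ j : Fin (n + 1), x ^ ((p.1.1 + 1) * j.1)
                = ∑ j ∈ Finset.range (n + 1), (x ^ (p.1.1 + 1)) ^ j := by
              rw [← Fin.sum_univ_eq_sum_range]
              exact Finset.sum_congr rfl fun j _ => by rw [← pow_mul]
            rw [heq]
            exact cpGeomLe (pow_nonneg hx0.le _)
              (pow_lt_one₀ hx0.le hx1 (Nat.succ_ne_zero _)) (n + 1)
      _ = ∏ m ∈ Finset.range n, ((1 - x ^ (m + 1))⁻¹) ^ k := by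
          rw [Fintype.prod_prod_type]
          rw [← Fin.prod_univ_eq_prod_range (fun m => ((1 - x ^ (m + 1))⁻¹) ^ k) n]
          exact Finset.prod_congr rfl fun a _ => by
            simp [Finset.prod_const]
  have h2 : ∏ m ∈ Finset.range n, ((1 - x ^ (m + 1))⁻¹) ^ k
      ≤ Real.exp (k * (π ^ 2 / 6 * (x / (1 - x)))) := by
    have heq : ∏ m ∈ Finset.range n, ((1 - x ^ (m + 1))⁻¹) ^ k
        = Real.exp (∑ m ∈ Finset.range n, (k : ℝ) * -Real.log (1 - x ^ (m + 1))) := by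
      rw [Real.exp_sum]
      refine Finset.prod_congr rfl fun m _ => ?_
      rw [Real.exp_nat_mul, Real.exp_neg, Real.exp_log (h1x m)]
    rw [heq, Real.exp_le_exp, ← Finset.mul_sum]
    exact mul_le_mul_of_nonneg_left (cpSumNegLog hx0 hx1 n) (Nat.cast_nonneg k)
  have hxn : 0 < x ^ n := pow_pos hx0 n
  calc (coloredPartition k n : ℝ)
      = (coloredPartition k n : ℝ) * x ^ n * (x⁻¹) ^ n := by
        rw [mul_assoc, ← mul_pow, mul_inv_cancel₀ hx0.ne', one_pow, mul_one]
    _ ≤ Real.exp (k * (π ^ 2 / 6 * (x / (1 - x)))) * (x⁻¹) ^ n :=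
        mul_le_mul_of_nonneg_right (h1.trans h2) (by positivity)
    _ = Real.exp (n * Real.log x⁻¹ + k * (π ^ 2 / 6 * (x / (1 - x)))) := by
        rw [Real.exp_add, Real.exp_nat_mul (Real.log x⁻¹) n, Real.exp_log (inv_pos.2 hx0), mul_comm]

theorem coloredPartition_le_exp (k n : ℕ) (hk : 1 ≤ k) :
    (coloredPartition k n : ℝ) ≤ Real.exp (π * Real.sqrt (2 * k * n / 3)) := by
  rcases Nat.eq_zero_or_pos n with hn | hn
  · subst hn
    have h1 : coloredPartition k 0 = 1 := by
      rw [coloredPartition, Nat.card_eq_one_iff_unique]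
      have hzero : ∀ s : Multiset (ℕ × Fin k), (∀ x ∈ s, 0 < x.1) →
          (s.map Prod.fst).sum = 0 → s = 0 := by
        intro s hpos hsum
        rw [Multiset.eq_zero_iff_forall_notMem]
        intro a ha
        have h1 : a.1 ≤ 0 := mem_fst_le s hsum ha
        have h2 := hpos a ha
        omega
      refine ⟨⟨fun s t => ?_⟩, ⟨⟨0, by simp, by simp⟩⟩⟩
      apply Subtype.ext
      rw [hzero s.1 s.2.1 s.2.2, hzero t.1 t.2.1 t.2.2]
    rw [h1]
    rw [show ((1 : ℕ) : ℝ) = 1 by norm_num]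
    apply Real.one_le_exp
    positivity
  · have hk0 : (0 : ℝ) < k := by exact_mod_cast hk
    have hn0 : (0 : ℝ) < n := by exact_mod_cast hn
    have hπ : 0 < π := Real.pi_pos
    set s : ℝ := Real.sqrt (6 * k * n) with hs
    have hs0 : 0 < s := Real.sqrt_pos.2 (by positivity)
    have hs2 : s ^ 2 = 6 * k * n := Real.sq_sqrt (by positivity)
    set u : ℝ := s / (k * π) with hu
    have hu0 : 0 < u := by positivity
    set x : ℝ := u / (1 + u) with hx
    have hx0 : 0 < x := by positivity
    have hx1 : x < 1 := by
      rw [hx, div_lt_one (by positivity)]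
      linarith
    have hxu : x / (1 - x) = u := by
      rw [hx]
      have h1u : (1 : ℝ) + u ≠ 0 := by positivity
      field_simp
      ring
    have hlogx : Real.log x⁻¹ ≤ 1 / u := by
      have hxinv : x⁻¹ = 1 + 1 / u := by
        rw [hx]
        have h1u : (1 : ℝ) + u ≠ 0 := by positivity
        field_simp
        ring
      rw [hxinv]
      have h := Real.log_le_sub_one_of_pos (show (0 : ℝ) < 1 + 1 / u by positivity)
      linarith
    refine (cpMainX hx0 hx1).trans (Real.exp_le_exp.2 ?_)
    rw [hxu]
    have e1 : (n : ℝ) * (1 / u) = π * s / 6 := by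
      rw [hu]
      field_simp
      nlinarith [hs2]
    have e2 : (k : ℝ) * (π ^ 2 / 6 * u) = π * s / 6 := by
      rw [hu]
      field_simp
    have e3 : π * Real.sqrt (2 * k * n / 3) = π * s / 3 := by
      have h9 : (2 * (k : ℝ) * n / 3) = (s / 3) ^ 2 := by
        rw [div_pow, hs2]
        ring
      rw [h9, Real.sqrt_sq (by positivity)]
      ring
    have h4 : (n : ℝ) * Real.log x⁻¹ ≤ n * (1 / u) :=
      mul_le_mul_of_nonneg_left hlogx hn0.le
    rw [e3]
    calc (n : ℝ) * Real.log x⁻¹ + k * (π ^ 2 / 6 * u)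
        ≤ n * (1 / u) + k * (π ^ 2 / 6 * u) := by linarith
      _ = π * s / 6 + π * s / 6 := by rw [e1, e2]
      _ = π * s / 3 := by ring


end CPaux
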